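/- Any metabolic non-singular almost even Hermitian matrix over ℤπ represents the trivial class in the group W̃(π) of stable congruence classes; equivalently, a matrix congruent to [[0, I],[I, X]] is stably congruent to a unidiagonal matrix. -/

import Mathlib

/-- The integral group ring ℤπ. -/
abbrev GroupRing (π : Type) [Group π] := MonoidAlgebra ℤ π

/-- The involution on ℤπ induced by g ↦ g⁻¹, extended ℤ-linearly. -/
noncomputable def GRconj {π : Type} [Group π] (x : GroupRing π) : GroupRing π :=
  MonoidAlgebra.ofCoeff (Finsupp.mapDomain (fun g : π => g⁻¹) x.coeff)

/-- Entrywise involution followed by transpose: the conjugate-transpose of a matrix over ℤπ. -/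
noncomputable def ctrans {π : Type} [Group π] {m n : Type} (A : Matrix m n (GroupRing π)) :
    Matrix n m (GroupRing π) :=
  (A.map GRconj).transpose

/-- Square matrices over ℤπ of size n. -/
abbrev Mat (π : Type) [Group π] (n : ℕ) := Matrix (Fin n) (Fin n) (GroupRing π)

/-- A square matrix over ℤπ is Hermitian if conj(A)ᵗ = A. -/
def IsHermitianGR {π : Type} [Group π] {n : ℕ} (A : Mat π n) : Prop :=
  ctrans A = A

/-- A matrix over ℤπ is almost even if for every g ∈ π with g² = 1 and g ≠ 1, the coefficient
of g in every diagonal entry is even. -/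
def AlmostEven {π : Type} [Group π] {n : ℕ} (A : Mat π n) : Prop :=
  ∀ (i : Fin n) (g : π), g ^ 2 = 1 → g ≠ 1 → Even ((A i i).coeff g)

/-- Block-diagonal sum of square matrices. -/
noncomputable def bsum {π : Type} [Group π] {m n : ℕ} (A : Mat π m) (B : Mat π n) :
    Mat π (m + n) :=
  Matrix.reindex finSumFinEquiv finSumFinEquiv (Matrix.fromBlocks A 0 0 B)

/-- Congruence over ℤπ: B = P·A·conj(P)ᵗ for some invertible P. -/
def CongruentGR {π : Type} [Group π] {n : ℕ} (A B : Mat π n) : Prop :=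
  ∃ P : Mat π n, IsUnit P ∧ B = P * A * ctrans P

/-- A unidiagonal matrix: diagonal with all diagonal entries ±1. -/
def Unidiagonal {π : Type} [Group π] {n : ℕ} (S : Mat π n) : Prop :=
  ∀ i j : Fin n, (i = j → S i j = 1 ∨ S i j = -1) ∧ (i ≠ j → S i j = 0)

/-- A non-singular almost even Hermitian matrix (of some size), as an element of a sigma type. -/
def GoodMat {π : Type} [Group π] (A : Σ n : ℕ, Mat π n) : Prop :=
  IsHermitianGR A.2 ∧ AlmostEven A.2 ∧ IsUnit A.2

/-- Stable congruence: A ⊕ S₁ is congruent to B ⊕ S₂ for some unidiagonal matrices S₁, S₂. -/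
def StablyCongruent {π : Type} [Group π] (A B : Σ n : ℕ, Mat π n) : Prop :=
  ∃ (k l : ℕ) (S₁ : Mat π k) (S₂ : Mat π l) (h : A.1 + k = B.1 + l),
    Unidiagonal S₁ ∧ Unidiagonal S₂ ∧
    CongruentGR (Matrix.reindex (finCongr h) (finCongr h) (bsum A.2 S₁)) (bsum B.2 S₂)

/-- The metabolic matrix [[0, I],[I, X]] of size n + n. -/
noncomputable def metab {π : Type} [Group π] {n : ℕ} (X : Mat π n) : Mat π (n + n) :=
  Matrix.reindex finSumFinEquiv finSumFinEquiv (Matrix.fromBlocks 0 1 1 X)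


section Work
variable {π : Type} [Group π]

lemma GRconj_apply (x : GroupRing π) (g : π) : (GRconj x).coeff g = x.coeff g⁻¹ := by
  have : g = (fun h : π => h⁻¹) g⁻¹ := by simp
  show (Finsupp.mapDomain (fun g : π => g⁻¹) x.coeff) g = x.coeff g⁻¹
  conv_lhs => rw [this]
  rw [Finsupp.mapDomain_apply (fun a b hab => by simpa using hab)]

lemma GRconj_add (x y : GroupRing π) : GRconj (x + y) = GRconj x + GRconj y :=
  congrArg MonoidAlgebra.ofCoeff Finsupp.mapDomain_add

lemma GRconj_zero : GRconj (0 : GroupRing π) = 0 := congrArg MonoidAlgebra.ofCoeff Finsupp.mapDomain_zero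

lemma GRconj_single (a : π) (r : ℤ) :
    GRconj (MonoidAlgebra.single a r) = MonoidAlgebra.single a⁻¹ r :=
  congrArg MonoidAlgebra.ofCoeff Finsupp.mapDomain_single

lemma GRconj_GRconj (x : GroupRing π) : GRconj (GRconj x) = x := by
  rw [GRconj, GRconj, MonoidAlgebra.coeff_ofCoeff, ← Finsupp.mapDomain_comp]
  simpa using Finsupp.mapDomain_id

lemma GRconj_mul (x y : GroupRing π) : GRconj (x * y) = GRconj y * GRconj x := by
  induction x using MonoidAlgebra.induction_linear with
  | zero => simp [GRconj_zero]
  | add f g hf hg =>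
    rw [add_mul, GRconj_add, GRconj_add, hf, hg, mul_add]
  | single a r =>
    induction y using MonoidAlgebra.induction_linear with
    | zero => simp [GRconj_zero]
    | add f g hf hg =>
      rw [mul_add, GRconj_add, GRconj_add, hf, hg, add_mul]
    | single b s =>
      show GRconj (MonoidAlgebra.single a r * MonoidAlgebra.single b s) = _
      rw [MonoidAlgebra.single_mul_single, GRconj_single, GRconj_single, GRconj_single,
        MonoidAlgebra.single_mul_single, mul_inv_rev, mul_comm s r]

noncomputable instance : StarRing (GroupRing π) where
  star := GRconj
  star_involutive := GRconj_GRconj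
  star_mul := GRconj_mul
  star_add := GRconj_add

lemma star_eq_GRconj (x : GroupRing π) : star x = GRconj x := rfl

open Matrix in
lemma ctrans_eq {m n : Type} (A : Matrix m n (GroupRing π)) : ctrans A = Aᴴ := rfl

lemma star_apply' (x : GroupRing π) (g : π) : (star x).coeff g = x.coeff g⁻¹ := GRconj_apply x g

open Matrix
section AE
variable {π : Type} [Group π] {g : π}

noncomputable def phim (g : π) : GroupRing π →+ ZMod 2 :=
  (Int.castAddHom (ZMod 2)).comp ((Finsupp.applyAddHom g).comp
    MonoidAlgebra.coeffAddEquiv.toAddMonoidHom)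

lemma phim_apply (x : GroupRing π) : phim g x = ((x.coeff g : ℤ) : ZMod 2) := rfl

lemma even_iff_phim (x : GroupRing π) : Even (x.coeff g) ↔ phim g x = 0 := by
  rw [phim_apply, ZMod.intCast_zmod_eq_zero_iff_dvd]
  constructor
  · rintro ⟨d, hd⟩; exact ⟨d, by omega⟩
  · rintro ⟨d, hd⟩; exact ⟨d, by omega⟩

lemma inv_eq_self_of_sq (hg2 : g ^ 2 = 1) : g⁻¹ = g := by
  rw [pow_two] at hg2
  exact inv_eq_of_mul_eq_one_right hg2

lemma phim_star (hg2 : g ^ 2 = 1) (x : GroupRing π) : phim g (star x) = phim g x := by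
  rw [phim_apply, phim_apply, star_apply', inv_eq_self_of_sq hg2]

lemma zmod2_self_add (a : ZMod 2) : a + a = 0 := by
  rw [← two_mul, show (2 : ZMod 2) = 0 from rfl, zero_mul]

lemma phim_add_star (hg2 : g ^ 2 = 1) (x : GroupRing π) : phim g (x + star x) = 0 := by
  rw [map_add, phim_star hg2, zmod2_self_add]

lemma phim_sandwich (hg2 : g ^ 2 = 1) (hg1 : g ≠ 1) (ξ : GroupRing π) (hξ : star ξ = ξ)
    (he : ∀ h : π, h ^ 2 = 1 → h ≠ 1 → Even (ξ.coeff h)) (a : GroupRing π) :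
    phim g (a * ξ * star a) = 0 := by
  have hadd' : ∀ a b : GroupRing π, phim g (a * ξ * star a) = 0 →
      phim g (b * ξ * star b) = 0 → phim g ((a + b) * ξ * star (a + b)) = 0 := by
    intro a b ha hb
    have star_cross : star (a * ξ * star b) = b * ξ * star a := by
      rw [StarMul.star_mul, StarMul.star_mul, star_star, hξ, mul_assoc]
    have key : (a + b) * ξ * star (a + b) =
        a * ξ * star a + b * ξ * star b + (a * ξ * star b + star (a * ξ * star b)) := by
      rw [star_cross, star_add]
      noncomm_ring
    rw [key, map_add, map_add, ha, hb, phim_add_star hg2, add_zero, add_zero]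
  have hsingle' : ∀ (u : π) (c : ℤ),
      phim g (MonoidAlgebra.single u c * ξ * star (MonoidAlgebra.single u c)) = 0 := by
    intro u c
    have hs : star (MonoidAlgebra.single u c) = MonoidAlgebra.single u⁻¹ c :=
      GRconj_single u c
    rw [hs, phim_apply]
    rw [MonoidAlgebra.coeff_mul_single_apply, MonoidAlgebra.coeff_single_mul_apply]
    simp only [inv_inv]
    have hh2 : (u⁻¹ * (g * u)) ^ 2 = 1 := by
      rw [pow_two, show (u⁻¹ * (g * u)) * (u⁻¹ * (g * u)) = u⁻¹ * (g * g) * u by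
        simp [mul_assoc], ← pow_two, hg2]
      simp
    have hh1 : u⁻¹ * (g * u) ≠ 1 := by
      intro h
      apply hg1
      have := congrArg (fun z => u * z * u⁻¹) h
      simpa [mul_assoc] using this
    obtain ⟨d, hd⟩ := he _ hh2 hh1
    rw [hd]
    have h2 : c * (d + d) * c = 2 * (c * d * c) := by ring
    rw [h2, Int.cast_mul, Int.cast_two, show (2 : ZMod 2) = 0 from rfl, zero_mul]
  induction a using MonoidAlgebra.induction_linear with
  | zero =>
    show phim g ((0 : GroupRing π) * ξ * star (0 : GroupRing π)) = 0
    simp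
  | add f f' hf hf' => exact hadd' f f' hf hf'
  | single u c => exact hsingle' u c

lemma ae_congr {m : Type} [Fintype m] [DecidableEq m] (M : Matrix m m (GroupRing π))
    (hM : Mᴴ = M) (hae : ∀ (k : m) (h : π), h ^ 2 = 1 → h ≠ 1 → Even ((M k k).coeff h))
    (P : Matrix m m (GroupRing π)) (i : m) (hg2 : g ^ 2 = 1) (hg1 : g ≠ 1) :
    Even (((P * M * Pᴴ) i i).coeff g) := by
  have hM' : ∀ k l, star (M k l) = M l k := by
    intro k l
    nth_rewrite 1 [← hM]
    rw [Matrix.conjTranspose_apply, star_star]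
  rw [even_iff_phim]
  have expand : (P * M * Pᴴ) i i = ∑ p ∈ Finset.univ ×ˢ Finset.univ,
      P i p.1 * M p.1 p.2 * star (P i p.2) := by
    rw [Matrix.mul_apply]
    rw [Finset.sum_product_right]
    apply Finset.sum_congr rfl
    intro l _
    rw [Matrix.mul_apply, Finset.sum_mul]
    apply Finset.sum_congr rfl
    intro k _
    rw [Matrix.conjTranspose_apply]
  rw [expand, map_sum]
  set c : m × m → ZMod 2 := fun p => phim g (P i p.1 * M p.1 p.2 * star (P i p.2)) with hc
  have csymm : ∀ p : m × m, c p.swap = c p := by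
    rintro ⟨k, l⟩
    show phim g (P i l * M l k * star (P i k)) = phim g (P i k * M k l * star (P i l))
    have : P i l * M l k * star (P i k) = star (P i k * M k l * star (P i l)) := by
      rw [StarMul.star_mul, StarMul.star_mul, star_star, hM' k l, mul_assoc]
    rw [this, phim_star hg2]
  rw [← Finset.sum_filter_add_sum_filter_not (Finset.univ ×ˢ Finset.univ)
    (fun p => p.1 = p.2) c]
  have hdiag : ∑ p ∈ (Finset.univ ×ˢ Finset.univ).filter (fun p : m × m => p.1 = p.2), c p = 0 := by
    apply Finset.sum_eq_zero
    rintro ⟨k, l⟩ hp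
    simp only [Finset.mem_filter] at hp
    obtain ⟨-, rfl⟩ := hp
    exact phim_sandwich hg2 hg1 (M k k) (hM' k k)
      (fun h h2 h1 => hae k h h2 h1) (P i k)
  have hoff : ∑ p ∈ (Finset.univ ×ˢ Finset.univ).filter
      (fun p : m × m => ¬ p.1 = p.2), c p = 0 := by
    refine Finset.sum_involution (fun p _ => p.swap) ?_ ?_ ?_ ?_
    · intro p _
      rw [csymm p, zmod2_self_add]
    · rintro ⟨k, l⟩ hp _ h
      simp only [Finset.mem_filter, Prod.ext_iff, Prod.swap] at hp h
      exact hp.2 h.1.symm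
    · rintro ⟨k, l⟩ hp
      simp only [Finset.mem_filter, Finset.mem_product, Finset.mem_univ, true_and,
        Prod.swap] at hp ⊢
      exact fun h => hp h.symm
    · intro p _
      exact Prod.swap_swap p
  rw [hdiag, hoff, add_zero]
end AE

section Split
variable {π : Type} [Group π]

lemma single_app (a : π) (r : ℤ) (h : π) [Decidable (a = h)] :
    (MonoidAlgebra.single a r : GroupRing π).coeff h = if a = h then r else 0 :=
  Finsupp.single_apply

lemma split_aux (m : ℕ) : ∀ η : GroupRing π, star η = η →
    (∀ g : π, g⁻¹ = g → Even (η.coeff g)) → η.coeff.support.card ≤ m →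
    ∃ ν : GroupRing π, η = ν + star ν := by
  classical
  induction m with
  | zero =>
    intro η _ _ hcard
    have : η = 0 := by
      rw [← MonoidAlgebra.coeff_eq_zero, ← Finsupp.support_eq_empty]
      exact Finset.card_eq_zero.mp (Nat.le_zero.mp hcard)
    exact ⟨0, by simp [this]⟩
  | succ m ih =>
    intro η hη he hcard
    by_cases h0 : η = 0
    · exact ⟨0, by simp [h0]⟩
    obtain ⟨g, hg⟩ := Finsupp.support_nonempty_iff.mpr (MonoidAlgebra.coeff_eq_zero.not.mpr h0)
    have hgmem : η.coeff g ≠ 0 := Finsupp.mem_support_iff.mp hg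
    by_cases hginv : g⁻¹ = g
    · obtain ⟨d, hd⟩ := he g hginv
      set x : GroupRing π := MonoidAlgebra.single g d with hx
      have hsx : star x = x := by
        show GRconj x = x
        rw [hx, GRconj_single, hginv]
      set η' : GroupRing π := η - (x + star x) with hη'
      have hη'g : η'.coeff g = 0 := by
        rw [hη', MonoidAlgebra.coeff_sub, MonoidAlgebra.coeff_add, Finsupp.sub_apply, Finsupp.add_apply, hsx, hx, single_app, if_pos rfl, hd]
        ring
      have hη'h : ∀ h : π, h ≠ g → η'.coeff h = η.coeff h := by
        intro h hh
        rw [hη', MonoidAlgebra.coeff_sub, MonoidAlgebra.coeff_add, Finsupp.sub_apply, Finsupp.add_apply, hsx, hx, single_app,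
          if_neg (fun e : g = h => hh e.symm)]
        ring
      have hη'star : star η' = η' := by
        rw [hη', star_sub, star_add, star_star, hη, hsx]
        try abel
      have hη'e : ∀ h : π, h⁻¹ = h → Even (η'.coeff h) := by
        intro h hh
        by_cases hhg : h = g
        · subst hhg; rw [hη'g]; exact Even.zero
        · rw [hη'h h hhg]; exact he h hh
      have hsupp : η'.coeff.support ⊆ η.coeff.support.erase g := by
        intro h hh
        rw [Finsupp.mem_support_iff] at hh
        have hhg : h ≠ g := fun e => hh (e ▸ hη'g)
        rw [Finset.mem_erase, Finsupp.mem_support_iff]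
        exact ⟨hhg, by rw [← hη'h h hhg]; exact hh⟩
      have hcard' : η'.coeff.support.card ≤ m := by
        have h1 := Finset.card_le_card hsupp
        have h2 := Finset.card_erase_of_mem hg
        have h3 : 1 ≤ η.coeff.support.card := Finset.card_pos.mpr ⟨g, hg⟩
        omega
      obtain ⟨ν', hν'⟩ := ih η' hη'star hη'e hcard'
      refine ⟨ν' + x, ?_⟩
      have hsplit : η = η' + (x + star x) := by rw [hη']; abel
      rw [hsplit, hν', star_add, hsx]
      abel
    · have hgg : η.coeff g⁻¹ = η.coeff g := by
        conv_lhs => rw [← hη]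
        rw [star_apply', inv_inv]
      set c := η.coeff g with hc
      set x : GroupRing π := MonoidAlgebra.single g c with hx
      have hsx : star x = MonoidAlgebra.single g⁻¹ c := GRconj_single g c
      set η' : GroupRing π := η - (x + star x) with hη'
      have hη'g : η'.coeff g = 0 := by
        rw [hη', MonoidAlgebra.coeff_sub, MonoidAlgebra.coeff_add, Finsupp.sub_apply, Finsupp.add_apply, hsx, hx, single_app, single_app,
          if_pos rfl, if_neg hginv]
        ring
      have hη'ginv : η'.coeff g⁻¹ = 0 := by
        rw [hη', MonoidAlgebra.coeff_sub, MonoidAlgebra.coeff_add, Finsupp.sub_apply, Finsupp.add_apply, hsx, hx, single_app, single_app,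
          if_pos rfl, if_neg (fun h : g = g⁻¹ => hginv h.symm), hgg]
        ring
      have hη'h : ∀ h : π, h ≠ g → h ≠ g⁻¹ → η'.coeff h = η.coeff h := by
        intro h h1 h2
        rw [hη', MonoidAlgebra.coeff_sub, MonoidAlgebra.coeff_add, Finsupp.sub_apply, Finsupp.add_apply, hsx, hx, single_app, single_app,
          if_neg (fun e : g = h => h1 e.symm), if_neg (fun e : g⁻¹ = h => h2 e.symm)]
        ring
      have hη'star : star η' = η' := by
        rw [hη', star_sub, star_add, star_star, hη, hsx]
        try abel
      have hη'e : ∀ h : π, h⁻¹ = h → Even (η'.coeff h) := by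
        intro h hh
        have h1 : h ≠ g := fun e => hginv (e ▸ hh)
        have h2 : h ≠ g⁻¹ := by
          intro e
          rw [e, inv_inv] at hh
          exact hginv hh.symm
        rw [hη'h h h1 h2]
        exact he h hh
      have hsupp : η'.coeff.support ⊆ η.coeff.support.erase g := by
        intro h hh
        rw [Finsupp.mem_support_iff] at hh
        have h1 : h ≠ g := fun e => hh (e ▸ hη'g)
        by_cases h2 : h = g⁻¹
        · exact absurd (h2 ▸ hη'ginv) hh
        · rw [Finset.mem_erase, Finsupp.mem_support_iff]
          exact ⟨h1, by rw [← hη'h h h1 h2]; exact hh⟩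
      have hcard' : η'.coeff.support.card ≤ m := by
        have h1 := Finset.card_le_card hsupp
        have h2 := Finset.card_erase_of_mem hg
        have h3 : 1 ≤ η.coeff.support.card := Finset.card_pos.mpr ⟨g, hg⟩
        omega
      obtain ⟨ν', hν'⟩ := ih η' hη'star hη'e hcard'
      refine ⟨ν' + x, ?_⟩
      have hsplit : η = η' + (x + star x) := by rw [hη']; abel
      rw [hsplit, hν', star_add]
      abel

lemma elt_split (ξ : GroupRing π) (hξ : star ξ = ξ)
    (he : ∀ g : π, g ^ 2 = 1 → g ≠ 1 → Even (ξ.coeff g)) :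
    ∃ (e ν : GroupRing π), (e = 0 ∨ e = 1) ∧ ξ = e + ν + star ν := by
  classical
  set e : GroupRing π := if Even (ξ.coeff 1) then 0 else 1 with hedef
  have hse : star e = e := by
    rw [hedef]; split <;> simp
  have he1 : e.coeff 1 = if Even (ξ.coeff 1) then 0 else 1 := by
    rw [hedef]; split
    · simp
    · rw [MonoidAlgebra.one_def, single_app, if_pos rfl]
  have heg : ∀ g : π, g ≠ 1 → e.coeff g = 0 := by
    intro g hgne
    rw [hedef]; split
    · simp
    · rw [MonoidAlgebra.one_def, single_app, if_neg (fun h => hgne h.symm)]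
  set η : GroupRing π := ξ - e with hη
  have hηstar : star η = η := by rw [hη, star_sub, hξ, hse]
  have hηe : ∀ g : π, g⁻¹ = g → Even (η.coeff g) := by
    intro g hginv
    by_cases hg1 : g = 1
    · subst hg1
      rw [hη, MonoidAlgebra.coeff_sub, Finsupp.sub_apply, he1]
      split
      · next h => simpa using h
      · next h =>
        rw [Int.even_sub]
        exact iff_of_false h (by decide)
    · have hg2 : g ^ 2 = 1 := by
        rw [pow_two]
        nth_rewrite 1 [← hginv]
        exact inv_mul_cancel g
      rw [hη, MonoidAlgebra.coeff_sub, Finsupp.sub_apply, heg g hg1, sub_zero]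
      exact he g hg2 hg1
  obtain ⟨ν, hν⟩ := split_aux η.coeff.support.card η hηstar hηe le_rfl
  refine ⟨e, ν, ?_, ?_⟩
  · rw [hedef]; split
    · exact Or.inl rfl
    · exact Or.inr rfl
  · have h1 : ξ = e + η := by rw [hη]; abel
    rw [h1, hν, add_assoc]
end Split

section Cong
open Matrix
variable {π : Type} [Group π]

lemma isUnit_of_inv {m : Type} [Fintype m] [DecidableEq m]
    (A B : Matrix m m (GroupRing π)) (h1 : A * B = 1) (h2 : B * A = 1) : IsUnit A :=
  ⟨⟨A, B, h1, h2⟩, rfl⟩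

/-- congruence with explicit inverse witness -/
def CongP {m : Type} [Fintype m] [DecidableEq m]
    (A B : Matrix m m (GroupRing π)) : Prop :=
  ∃ P Q : Matrix m m (GroupRing π), P * Q = 1 ∧ Q * P = 1 ∧ B = P * A * Pᴴ

lemma CongP_refl {m : Type} [Fintype m] [DecidableEq m] (A : Matrix m m (GroupRing π)) :
    CongP A A :=
  ⟨1, 1, one_mul 1, one_mul 1, by simp⟩

lemma CongP_of_eq {m : Type} [Fintype m] [DecidableEq m] {A B : Matrix m m (GroupRing π)}
    (h : A = B) : CongP A B := h ▸ CongP_refl A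

lemma CongP_trans {m : Type} [Fintype m] [DecidableEq m]
    {A B C : Matrix m m (GroupRing π)} (h1 : CongP A B) (h2 : CongP B C) : CongP A C := by
  obtain ⟨P, Q, hPQ, hQP, rfl⟩ := h1
  obtain ⟨R, S, hRS, hSR, rfl⟩ := h2
  refine ⟨R * P, Q * S, ?_, ?_, ?_⟩
  · calc R * P * (Q * S) = R * (P * Q) * S := by noncomm_ring
    _ = 1 := by rw [hPQ, mul_one, hRS]
  · calc Q * S * (R * P) = Q * (S * R) * P := by noncomm_ring
    _ = 1 := by rw [hSR, mul_one, hQP]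
  · rw [Matrix.conjTranspose_mul]
    noncomm_ring

lemma CongP_symm {m : Type} [Fintype m] [DecidableEq m]
    {A B : Matrix m m (GroupRing π)} (h : CongP A B) : CongP B A := by
  obtain ⟨P, Q, hPQ, hQP, rfl⟩ := h
  refine ⟨Q, P, hQP, hPQ, ?_⟩
  have hcj : Pᴴ * Qᴴ = 1 := by rw [← Matrix.conjTranspose_mul, hQP, Matrix.conjTranspose_one]
  calc A = (Q * P) * A * (Pᴴ * Qᴴ) := by rw [hQP, hcj]; simp
  _ = Q * (P * A * Pᴴ) * Qᴴ := by noncomm_ring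

lemma one_sub {m m' : Type} [Fintype m] [DecidableEq m] [Fintype m'] [DecidableEq m']
    (f : m' ≃ m) : (1 : Matrix m m (GroupRing π)).submatrix f f = 1 := by
  ext i j
  simp [Matrix.one_apply, f.injective.eq_iff]

lemma CongP_submatrix {m m' : Type} [Fintype m] [DecidableEq m] [Fintype m'] [DecidableEq m']
    {A B : Matrix m m (GroupRing π)} (f : m' ≃ m) (h : CongP A B) :
    CongP (A.submatrix f f) (B.submatrix f f) := by
  obtain ⟨P, Q, hPQ, hQP, rfl⟩ := h
  refine ⟨P.submatrix f f, Q.submatrix f f, ?_, ?_, ?_⟩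
  · rw [Matrix.submatrix_mul_equiv, hPQ, one_sub]
  · rw [Matrix.submatrix_mul_equiv, hQP, one_sub]
  · simp only [Matrix.conjTranspose_submatrix, Matrix.submatrix_mul_equiv]

def CongT {m m' : Type} [Fintype m] [DecidableEq m] [Fintype m'] [DecidableEq m']
    (A : Matrix m m (GroupRing π)) (B : Matrix m' m' (GroupRing π)) : Prop :=
  ∃ e : m ≃ m', CongP (A.submatrix e.symm e.symm) B

lemma congT_of_congP {m : Type} [Fintype m] [DecidableEq m]
    {A B : Matrix m m (GroupRing π)} (h : CongP A B) : CongT A B :=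
  ⟨Equiv.refl m, by simpa using h⟩

lemma CongT_trans {m₁ m₂ m₃ : Type} [Fintype m₁] [DecidableEq m₁] [Fintype m₂] [DecidableEq m₂]
    [Fintype m₃] [DecidableEq m₃] {A : Matrix m₁ m₁ (GroupRing π)}
    {B : Matrix m₂ m₂ (GroupRing π)} {C : Matrix m₃ m₃ (GroupRing π)}
    (h1 : CongT A B) (h2 : CongT B C) : CongT A C := by
  obtain ⟨e, he⟩ := h1
  obtain ⟨f, hf⟩ := h2
  refine ⟨e.trans f, ?_⟩
  have key : A.submatrix (e.trans f).symm (e.trans f).symm =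
      (A.submatrix e.symm e.symm).submatrix f.symm f.symm := by
    rw [Matrix.submatrix_submatrix]
    rfl
  rw [key]
  exact CongP_trans (CongP_submatrix f.symm he) hf

lemma CongT_symm {m₁ m₂ : Type} [Fintype m₁] [DecidableEq m₁] [Fintype m₂] [DecidableEq m₂]
    {A : Matrix m₁ m₁ (GroupRing π)} {B : Matrix m₂ m₂ (GroupRing π)}
    (h : CongT A B) : CongT B A := by
  obtain ⟨e, he⟩ := h
  refine ⟨e.symm, ?_⟩
  have h2 := CongP_submatrix e.symm.symm (CongP_symm he)
  have key : (A.submatrix e.symm e.symm).submatrix e.symm.symm e.symm.symm = A := by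
    rw [Matrix.submatrix_submatrix]
    have h3 : (e.symm ∘ e.symm.symm : m₁ → m₁) = id := by
      funext x; simp
    rw [h3, Matrix.submatrix_id_id]
  rwa [key] at h2

lemma congT_sub {m m' : Type} [Fintype m] [DecidableEq m] [Fintype m'] [DecidableEq m']
    (E : m' ≃ m) (M : Matrix m m (GroupRing π)) : CongT (M.submatrix E E) M := by
  refine ⟨E, ?_⟩
  have h : (M.submatrix E E).submatrix E.symm E.symm = M := by
    rw [Matrix.submatrix_submatrix]
    have h1 : (E ∘ E.symm : m → m) = id := by funext x; simp
    rw [h1, Matrix.submatrix_id_id]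
  rw [h]
  exact CongP_refl M

lemma congT_sub' {m m' : Type} [Fintype m] [DecidableEq m] [Fintype m'] [DecidableEq m']
    (E : m' ≃ m) (M : Matrix m m (GroupRing π)) : CongT M (M.submatrix E E) :=
  CongT_symm (congT_sub E M)

lemma CongP_fromBlocks {l m : Type} [Fintype l] [DecidableEq l] [Fintype m] [DecidableEq m]
    {A A' : Matrix l l (GroupRing π)} {B B' : Matrix m m (GroupRing π)}
    (hA : CongP A A') (hB : CongP B B') :
    CongP (Matrix.fromBlocks A 0 0 B) (Matrix.fromBlocks A' 0 0 B') := by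
  obtain ⟨P, Q, hPQ, hQP, rfl⟩ := hA
  obtain ⟨R, S, hRS, hSR, rfl⟩ := hB
  refine ⟨Matrix.fromBlocks P 0 0 R, Matrix.fromBlocks Q 0 0 S, ?_, ?_, ?_⟩
  · rw [Matrix.fromBlocks_multiply]
    simp [hPQ, hRS, Matrix.fromBlocks_one]
  · rw [Matrix.fromBlocks_multiply]
    simp [hQP, hSR, Matrix.fromBlocks_one]
  · rw [Matrix.fromBlocks_conjTranspose, Matrix.fromBlocks_multiply,
      Matrix.fromBlocks_multiply]
    simp

lemma CongP_blockDiagonal {ι m : Type} [Fintype ι] [DecidableEq ι] [Fintype m] [DecidableEq m]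
    {M N : ι → Matrix m m (GroupRing π)} (h : ∀ i, CongP (M i) (N i)) :
    CongP (Matrix.blockDiagonal M) (Matrix.blockDiagonal N) := by
  choose P Q h1 h2 h3 using h
  refine ⟨Matrix.blockDiagonal P, Matrix.blockDiagonal Q, ?_, ?_, ?_⟩
  · rw [← Matrix.blockDiagonal_mul]
    simp only [h1]
    exact Matrix.blockDiagonal_one
  · rw [← Matrix.blockDiagonal_mul]
    simp only [h2]
    exact Matrix.blockDiagonal_one
  · rw [Matrix.blockDiagonal_conjTranspose, ← Matrix.blockDiagonal_mul,
      ← Matrix.blockDiagonal_mul]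
    have hN : N = fun k => P k * M k * (P k)ᴴ := funext h3
    rw [hN]

lemma perm_congP {m : Type} [Fintype m] [DecidableEq m] (e : m ≃ m)
    (A : Matrix m m (GroupRing π)) : CongP A (A.submatrix e e) := by
  set P : Matrix m m (GroupRing π) := (1 : Matrix m m (GroupRing π)).submatrix e id with hP
  have hP' : P = (1 : Matrix m m (GroupRing π)).submatrix id e.symm := by
    ext i j
    simp only [hP, Matrix.submatrix_apply, Matrix.one_apply, id_eq]
    by_cases h : e i = j
    · rw [if_pos h, if_pos (by rw [← h, Equiv.symm_apply_apply])]
    · rw [if_neg h, if_neg (fun hh => h (by rw [hh, Equiv.apply_symm_apply]))]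
  have hPH : Pᴴ = (1 : Matrix m m (GroupRing π)).submatrix id e := by
    ext i j
    simp only [hP, Matrix.conjTranspose_apply, Matrix.submatrix_apply, Matrix.one_apply, id_eq]
    by_cases h : e j = i
    · rw [if_pos h, if_pos h.symm, star_one]
    · rw [if_neg h, if_neg (fun hh : i = e j => h hh.symm), star_zero]
  have hQ' : (1 : Matrix m m (GroupRing π)).submatrix e.symm id
      = (1 : Matrix m m (GroupRing π)).submatrix id e := by
    ext i j
    simp only [Matrix.submatrix_apply, Matrix.one_apply, id_eq]
    by_cases h : e.symm i = j
    · rw [if_pos h, if_pos (by rw [← h, Equiv.apply_symm_apply])]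
    · rw [if_neg h, if_neg (fun hh => h (by rw [hh, Equiv.symm_apply_apply]))]
  have hmul1 : ∀ (f : m → m) (B : Matrix m m (GroupRing π)),
      (1 : Matrix m m (GroupRing π)).submatrix f id * B = B.submatrix f id := by
    intro f B
    have h := Matrix.submatrix_mul_equiv (1 : Matrix m m (GroupRing π)) B
      (f : m → m) (Equiv.refl m) (id : m → m)
    simpa using h
  have hmul2 : ∀ (B : Matrix m m (GroupRing π)),
      B * (1 : Matrix m m (GroupRing π)).submatrix id e = B.submatrix id e := by
    intro B
    have h := Matrix.submatrix_mul_equiv B (1 : Matrix m m (GroupRing π))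
      (id : m → m) (Equiv.refl m) (e : m → m)
    simpa using h
  refine ⟨P, (1 : Matrix m m (GroupRing π)).submatrix e.symm id, ?_, ?_, ?_⟩
  · rw [hQ', hmul2, hP, Matrix.submatrix_submatrix]
    exact one_sub e
  · rw [hmul1, hP, Matrix.submatrix_submatrix]
    have hco : ((e : m → m) ∘ (e.symm : m → m)) = (id : m → m) :=
      funext fun x => e.apply_symm_apply x
    rw [hco]
    exact Matrix.submatrix_id_id _
  · rw [hPH, hP, hmul1, hmul2, Matrix.submatrix_submatrix]
    rfl

lemma congT_to_congP {m : Type} [Fintype m] [DecidableEq m]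
    {A B : Matrix m m (GroupRing π)} (h : CongT A B) : CongP A B := by
  obtain ⟨e, he⟩ := h
  exact CongP_trans (perm_congP e.symm A) he
end Cong

section Blocks
open Matrix
variable {π : Type} [Group π]

lemma mat_split {n : ℕ} (X : Mat π n) (hX : Xᴴ = X)
    (hae : ∀ (i : Fin n) (g : π), g ^ 2 = 1 → g ≠ 1 → Even ((X i i).coeff g)) :
    ∃ (e : Fin n → GroupRing π) (N : Mat π n), (∀ i, e i = 0 ∨ e i = 1) ∧
      X = Matrix.diagonal e + N + Nᴴ := by
  classical
  have hherm : ∀ i, star (X i i) = X i i := by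
    intro i
    have h := congrFun (congrFun hX i) i
    rwa [Matrix.conjTranspose_apply] at h
  have hXsym : ∀ i j, star (X j i) = X i j := by
    intro i j
    have h := congrFun (congrFun hX i) j
    rwa [Matrix.conjTranspose_apply] at h
  choose e ν he hsplit using fun i => elt_split (X i i) (hherm i) (hae i)
  refine ⟨e, Matrix.of (fun i j => if (j : ℕ) < (i : ℕ) then X i j
    else if i = j then ν i else 0), he, ?_⟩
  refine Matrix.ext fun i j => ?_
  simp only [Matrix.add_apply, Matrix.diagonal_apply, Matrix.conjTranspose_apply,
    Matrix.of_apply]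
  by_cases hij : i = j
  · subst hij
    simp only [lt_irrefl, if_false, if_pos rfl]
    exact hsplit i
  · have hvij : (i : ℕ) ≠ (j : ℕ) := fun h => hij (Fin.ext h)
    have hji : ¬ j = i := fun h => hij h.symm
    rw [if_neg hij]
    rcases lt_or_gt_of_ne hvij with hlt | hgt
    · rw [if_neg (by omega), if_neg hij, if_pos hlt, hXsym]
      abel
    · rw [if_pos hgt, if_neg (by omega), if_neg hji, star_zero]
      abel

lemma metab_reduce {n : ℕ} (D N X : Mat π n) (hX : X = D + N + Nᴴ) :
    CongP (Matrix.fromBlocks (0 : Mat π n) (1 : Mat π n) (1 : Mat π n) D)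
      (Matrix.fromBlocks (0 : Mat π n) (1 : Mat π n) (1 : Mat π n) X) := by
  refine ⟨Matrix.fromBlocks (1 : Mat π n) (0 : Mat π n) N (1 : Mat π n),
    Matrix.fromBlocks (1 : Mat π n) (0 : Mat π n) (-N) (1 : Mat π n), ?_, ?_, ?_⟩
  · rw [Matrix.fromBlocks_multiply]
    simp [Matrix.fromBlocks_one]
  · rw [Matrix.fromBlocks_multiply]
    simp [Matrix.fromBlocks_one]
  · rw [Matrix.fromBlocks_conjTranspose, Matrix.fromBlocks_multiply]
    simp only [Matrix.conjTranspose_one, Matrix.conjTranspose_zero, Matrix.mul_zero,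
      Matrix.mul_one, Matrix.zero_mul, Matrix.one_mul, zero_add, add_zero]
    rw [Matrix.fromBlocks_multiply]
    simp only [Matrix.mul_zero, Matrix.mul_one, Matrix.zero_mul, Matrix.one_mul,
      zero_add, add_zero]
    rw [hX]
    congr 1
    abel

def tripleEquiv (n : ℕ) : ((Fin n ⊕ Fin n) ⊕ Fin n) ≃ (Fin 3 × Fin n) where
  toFun x := match x with
    | Sum.inl (Sum.inl i) => (0, i)
    | Sum.inl (Sum.inr i) => (1, i)
    | Sum.inr i => (2, i)
  invFun p := ![fun i => Sum.inl (Sum.inl i), fun i => Sum.inl (Sum.inr i),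
    fun i => Sum.inr i] p.1 p.2
  left_inv := by rintro ((i|i)|i) <;> rfl
  right_inv := by
    rintro ⟨a, i⟩
    fin_cases a <;> rfl

lemma blockEq {n : ℕ} (e : Fin n → GroupRing π) :
    Matrix.fromBlocks (Matrix.fromBlocks 0 1 1 (Matrix.diagonal e)) 0 0 (1 : Mat π n)
      = (Matrix.blockDiagonal (fun i => !![0, 1, 0; 1, e i, 0; 0, 0, 1])).submatrix
          (tripleEquiv n) (tripleEquiv n) := by
  ext x y
  rcases x with (i | i) | i <;> rcases y with (j | j) | j <;>
    simp [tripleEquiv, Matrix.blockDiagonal_apply, Matrix.one_apply,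
      Matrix.diagonal_apply, eq_comm] <;>
    by_cases h : i = j <;> simp [h]
end Blocks

section Final
open Matrix
variable {π : Type} [Group π]

set_option maxHeartbeats 1000000 in
lemma block_cong (c : GroupRing π) (hc : c = 0 ∨ c = 1) :
    ∃ U : Matrix (Fin 3) (Fin 3) (GroupRing π),
      (∀ i j : Fin 3, (i = j → U i j = 1 ∨ U i j = -1) ∧ (i ≠ j → U i j = 0)) ∧
      CongP !![0, 1, 0; 1, c, 0; 0, 0, 1] U := by
  rcases hc with rfl | rfl
  · refine ⟨!![1,0,0; 0,1,0; 0,0,-1], ?_, !![1,0,1; 0,1,-1; 1,-1,1],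
      !![0,1,1; 1,0,-1; 1,-1,-1], ?_, ?_, ?_⟩
    · intro i j
      refine ⟨fun h => ?_, fun h => ?_⟩
      · subst h
        fin_cases i
        · left; norm_num
        · left; norm_num
        · right; norm_num
      · fin_cases i <;> fin_cases j <;> first | exact absurd rfl h | norm_num
    · rw [Matrix.mul_fin_three, Matrix.eta_fin_three 1]
      refine Matrix.ext fun i j => ?_
      fin_cases i <;> fin_cases j <;> norm_num [Matrix.one_apply] <;> first | rfl | decide
    · rw [Matrix.mul_fin_three, Matrix.eta_fin_three 1]
      refine Matrix.ext fun i j => ?_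
      fin_cases i <;> fin_cases j <;> norm_num [Matrix.one_apply] <;> first | rfl | decide
    · have hPH : (!![1,0,1; 0,1,-1; 1,-1,1] : Matrix (Fin 3) (Fin 3) (GroupRing π))ᴴ
          = !![1,0,1; 0,1,-1; 1,-1,1] := by
        refine Matrix.ext fun i j => ?_
        rw [Matrix.conjTranspose_apply]
        fin_cases i <;> fin_cases j <;> norm_num [star_zero, star_one, star_neg]
      rw [hPH, Matrix.mul_fin_three, Matrix.mul_fin_three]
      refine Matrix.ext fun i j => ?_
      fin_cases i <;> fin_cases j <;> norm_num
  · refine ⟨!![1,0,0; 0,-1,0; 0,0,1], ?_, !![0,1,0; 1,-1,0; 0,0,1],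
      !![1,1,0; 1,0,0; 0,0,1], ?_, ?_, ?_⟩
    · intro i j
      refine ⟨fun h => ?_, fun h => ?_⟩
      · subst h
        fin_cases i
        · left; norm_num
        · right; norm_num
        · left; norm_num
      · fin_cases i <;> fin_cases j <;> first | exact absurd rfl h | norm_num
    · rw [Matrix.mul_fin_three, Matrix.eta_fin_three 1]
      refine Matrix.ext fun i j => ?_
      fin_cases i <;> fin_cases j <;> norm_num [Matrix.one_apply] <;> first | rfl | decide
    · rw [Matrix.mul_fin_three, Matrix.eta_fin_three 1]
      refine Matrix.ext fun i j => ?_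
      fin_cases i <;> fin_cases j <;> norm_num [Matrix.one_apply] <;> first | rfl | decide
    · have hPH : (!![0,1,0; 1,-1,0; 0,0,1] : Matrix (Fin 3) (Fin 3) (GroupRing π))ᴴ
          = !![0,1,0; 1,-1,0; 0,0,1] := by
        refine Matrix.ext fun i j => ?_
        rw [Matrix.conjTranspose_apply]
        fin_cases i <;> fin_cases j <;> norm_num [star_zero, star_one, star_neg]
      rw [hPH, Matrix.mul_fin_three, Matrix.mul_fin_three]
      refine Matrix.ext fun i j => ?_
      fin_cases i <;> fin_cases j <;> norm_num

lemma fromBlocks_sub {m m' o : Type} [Fintype m] [DecidableEq m] [Fintype m'] [DecidableEq m']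
    [Fintype o] [DecidableEq o] (M : Matrix m m (GroupRing π)) (B : Matrix o o (GroupRing π))
    (E : m' ≃ m) :
    Matrix.fromBlocks (M.submatrix E E) 0 0 B
      = (Matrix.fromBlocks M 0 0 B).submatrix (E.sumCongr (Equiv.refl o))
          (E.sumCongr (Equiv.refl o)) := by
  ext x y
  rcases x with i | i <;> rcases y with j | j <;> rfl

lemma bsum_nil {m : ℕ} (B : Mat π m) (C : Mat π 0) : bsum B C = B := by
  refine Matrix.ext fun i j => ?_
  show Matrix.fromBlocks B 0 0 C (finSumFinEquiv.symm i) (finSumFinEquiv.symm j) = B i j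
  have key : ∀ x : Fin (m + 0), finSumFinEquiv.symm x = Sum.inl (⟨x.1, by omega⟩ : Fin m) := by
    intro x
    have hx : x = Fin.castAdd 0 (⟨x.1, by omega⟩ : Fin m) := Fin.ext rfl
    rw [hx]
    exact finSumFinEquiv_symm_apply_castAdd _
  rw [key i, key j]
  rfl

theorem metabolic_is_trivial' (π : Type) [Group π] (n : ℕ)
    (A : Mat π (n + n)) (hA : GoodMat ⟨n + n, A⟩)
    (X : Mat π n) (hmet : CongruentGR A (metab X)) :
    ∃ (k : ℕ) (S : Mat π k), Unidiagonal S ∧ StablyCongruent ⟨n + n, A⟩ ⟨k, S⟩ := by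
  classical
  have hAh : Aᴴ = A := hA.1
  -- step 1 : CongP A (metab X)
  have hCP : CongP A (metab X) := by
    obtain ⟨P0, hP0u, hP0e⟩ := hmet
    obtain ⟨u, rfl⟩ := hP0u
    exact ⟨u.val, u.inv, u.val_inv, u.inv_val, hP0e⟩
  -- step 2 : metab X is Hermitian
  have hMh : (metab X)ᴴ = metab X := by
    obtain ⟨P, Q, h1, h2, hB⟩ := hCP
    rw [hB]
    simp [Matrix.conjTranspose_mul, hAh, Matrix.mul_assoc]
  have hXapp : ∀ a b : Fin n ⊕ Fin n,
      metab X (finSumFinEquiv a) (finSumFinEquiv b)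
        = Matrix.fromBlocks (0 : Mat π n) 1 1 X a b := by
    intro a b
    show Matrix.fromBlocks (0 : Mat π n) 1 1 X
      (finSumFinEquiv.symm (finSumFinEquiv a)) (finSumFinEquiv.symm (finSumFinEquiv b)) = _
    rw [Equiv.symm_apply_apply, Equiv.symm_apply_apply]
  -- step 3 : X is Hermitian
  have hXh : Xᴴ = X := by
    refine Matrix.ext fun i j => ?_
    have h := congrFun (congrFun hMh (finSumFinEquiv (Sum.inr i))) (finSumFinEquiv (Sum.inr j))
    rw [Matrix.conjTranspose_apply, hXapp, hXapp] at h
    rw [Matrix.conjTranspose_apply]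
    exact h
  -- step 4 : diagonal of X is almost even
  have hXe : ∀ (i : Fin n) (g : π), g ^ 2 = 1 → g ≠ 1 → Even ((X i i).coeff g) := by
    intro i g hg2 hg1
    obtain ⟨P, Q, h1, h2, hB⟩ := hCP
    have h := ae_congr A hAh hA.2.1 P (finSumFinEquiv (Sum.inr i)) hg2 hg1
    rw [← hB] at h
    have h3 := hXapp (Sum.inr i) (Sum.inr i)
    rw [h3] at h
    exact h
  -- step 5 : split X
  obtain ⟨e, N, he01, hXsplit⟩ := mat_split X hXh hXe
  -- step 6 : per-block data
  choose U hUuni hUcong using fun i => block_cong (e i) (he01 i)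
  -- the assembly
  have h : (n + n) + n = (n + n + n) + 0 := rfl
  set c : Fin ((n + n) + n) ≃ Fin ((n + n + n) + 0) := finCongr h with hcdef
  set M0 : Mat π ((n + n) + n) := bsum A (1 : Mat π n) with hM0
  set f : Fin ((n + n + n) + 0) ≃ (Fin 3 × Fin n) :=
    Fintype.equivOfCardEq (by simp; omega) with hfdef
  set S : Mat π ((n + n + n) + 0) :=
    (Matrix.blockDiagonal U).submatrix f f with hSdef
  have hSuni : Unidiagonal (S : Mat π (n + n + n)) := by
    intro i j
    constructor
    · intro hij
      subst hij
      have hS : S i i = Matrix.blockDiagonal U (f i) (f i) := rfl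
      rw [hS, Matrix.blockDiagonal_apply, if_pos rfl]
      exact (hUuni (f i).2 (f i).1 (f i).1).1 rfl
    · intro hij
      have hS : S i j = Matrix.blockDiagonal U (f i) (f j) := rfl
      rw [hS, Matrix.blockDiagonal_apply]
      by_cases hsnd : (f i).2 = (f j).2
      · rw [if_pos hsnd]
        have hfst : (f i).1 ≠ (f j).1 := by
          intro hfst
          exact hij (f.injective (Prod.ext hfst hsnd))
        exact (hUuni (f i).2 (f i).1 (f j).1).2 hfst
      · rw [if_neg hsnd]
  -- the big congruence chain
  have t1 : CongT (Matrix.reindex c c M0) M0 := by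
    rw [Matrix.reindex_apply]
    exact congT_sub c.symm M0
  have t2 : CongT M0 (Matrix.fromBlocks A 0 0 (1 : Mat π n)) := by
    rw [hM0, bsum, Matrix.reindex_apply]
    exact congT_sub finSumFinEquiv.symm _
  have t3 : CongT (Matrix.fromBlocks A 0 0 (1 : Mat π n))
      (Matrix.fromBlocks (metab X) 0 0 (1 : Mat π n)) :=
    congT_of_congP (CongP_fromBlocks hCP (CongP_refl _))
  have hmetabsub : metab X = (Matrix.fromBlocks (0 : Mat π n) 1 1 X).submatrix
      finSumFinEquiv.symm finSumFinEquiv.symm := by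
    rw [metab, Matrix.reindex_apply]
  have t4 : CongT (Matrix.fromBlocks (metab X) 0 0 (1 : Mat π n))
      (Matrix.fromBlocks (Matrix.fromBlocks (0 : Mat π n) 1 1 X) 0 0 (1 : Mat π n)) := by
    rw [hmetabsub, fromBlocks_sub]
    exact congT_sub _ _
  have t5 : CongT (Matrix.fromBlocks (Matrix.fromBlocks (0 : Mat π n) 1 1 X) 0 0 (1 : Mat π n))
      (Matrix.fromBlocks (Matrix.fromBlocks (0 : Mat π n) 1 1 (Matrix.diagonal e)) 0 0
        (1 : Mat π n)) :=
    congT_of_congP (CongP_fromBlocks (CongP_symm (metab_reduce (Matrix.diagonal e) N X hXsplit))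
      (CongP_refl _))
  have t6 : CongT (Matrix.fromBlocks (Matrix.fromBlocks (0 : Mat π n) 1 1 (Matrix.diagonal e))
      0 0 (1 : Mat π n)) (Matrix.blockDiagonal (fun i => !![0, 1, 0; 1, e i, 0; 0, 0, 1])) := by
    rw [blockEq]
    exact congT_sub _ _
  have t7 : CongT (Matrix.blockDiagonal (fun i => !![0, 1, 0; 1, e i, 0; 0, 0, 1]))
      (Matrix.blockDiagonal U) :=
    congT_of_congP (CongP_blockDiagonal hUcong)
  have t8 : CongT (Matrix.blockDiagonal U) S := congT_sub' f _
  have hT : CongT (Matrix.reindex c c M0) S :=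
    CongT_trans t1 (CongT_trans t2 (CongT_trans t3 (CongT_trans t4 (CongT_trans t5
      (CongT_trans t6 (CongT_trans t7 t8))))))
  obtain ⟨P, Q, h1, h2, hB⟩ := congT_to_congP hT
  refine ⟨n + n + n, S, hSuni, n, 0, (1 : Mat π n), (1 : Mat π 0), h, ?_, ?_, ?_⟩
  · intro i j
    refine ⟨fun hij => Or.inl ?_, fun hij => ?_⟩
    · subst hij; exact Matrix.one_apply_eq i
    · exact Matrix.one_apply_ne hij
  · intro i j
    exact i.elim0
  · rw [bsum_nil]
    exact ⟨P, isUnit_of_inv P Q h1 h2, hB⟩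
end Final


/-- A metabolic non-singular almost even Hermitian matrix is stably congruent to a unidiagonal
matrix, i.e. represents the trivial class in the group of stable congruence classes. -/
theorem metabolic_is_trivial (π : Type) [Group π] (n : ℕ)
    (A : Mat π (n + n)) (hA : GoodMat ⟨n + n, A⟩)
    (X : Mat π n) (hmet : CongruentGR A (metab X)) :
    ∃ (k : ℕ) (S : Mat π k), Unidiagonal S ∧ StablyCongruent ⟨n + n, A⟩ ⟨k, S⟩ := by
  exact metabolic_is_trivial' π n A hA X hmet
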